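/- Let S = {1,2,3} and let Σ be the semigroup of all self-maps of S under composition. Let σ⁽¹⁾ ∈ Σ be the map 1↦2, 2↦1, 3↦2, and σ⁽²⁾ ∈ Σ the map 1↦3, 2↦3, 3↦1. Let p, q > 0 with p + q = 1, let μ be the probability measure on Σ with μ({σ⁽¹⁾}) = p and μ({σ⁽²⁾}) = q, and let the noise law be μ_k = μ for all k ∈ -ℕ. Then for any solution {X,N} of Tsirelson's equation: (i) for each k ∈ -ℕ, P(X_k = 1) = (1 - pq)/(2 + pq), P(X_k = 2) = (p + pq)/(2 + pq), and P(X_k = 3) = (q + pq)/(2 + pq); (ii) uniqueness in law holds; (iii) the process {X,N} is stationary, i.e., for every n ∈ ℕ, (X_{k+n}, N_{k+n} : k ∈ -ℕ) has the same law as (X_k, N_k : k ∈ -ℕ); (iv) every solution is strong. -/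

import Mathlib

open MeasureTheory ProbabilityTheory Filter Topology
open scoped NNReal ENNReal

universe u v w w₂

noncomputable section

/-- The sub-σ-field generated by the process `Y` from index `k` on; since index `j : ℕ`
stands for time `-j`, this is the σ-field of the past `σ(Y_j : j ≤ -k)`. -/
def past {Ω α : Type*} [MeasurableSpace α] (Y : ℕ → Ω → α) (k : ℕ) : MeasurableSpace Ω :=
  ⨆ j ≥ k, MeasurableSpace.comap (Y j) inferInstance

/-- A solution of Tsirelson's equation with noise law `μ`.  The index `k : ℕ` stands for the
time `-k ∈ -ℕ`, so that time `k - 1` corresponds to index `k + 1`. -/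
structure IsSolution {Ω S G : Type*} [MeasurableSpace Ω] [MeasurableSpace S] [MeasurableSpace G]
    [SMul G S] (P : Measure Ω) (μ : ℕ → Measure G)
    (X : ℕ → Ω → S) (N : ℕ → Ω → G) : Prop where
  measurable_X : ∀ k, Measurable (X k)
  measurable_N : ∀ k, Measurable (N k)
  eqn : ∀ k, X k =ᵐ[P] fun ω => N k ω • X (k + 1) ω
  indep : ∀ k, Indep (MeasurableSpace.comap (N k) inferInstance)
      (past X (k + 1) ⊔ past N (k + 1)) P
  law_N : ∀ k, P.map (N k) = μ k

/-- The joint law of `(X, N)` on the path space `S^{-ℕ} × Σ^{-ℕ}`. -/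
def jointLaw {Ω S G : Type*} [MeasurableSpace Ω] [MeasurableSpace S] [MeasurableSpace G]
    (P : Measure Ω) (X : ℕ → Ω → S) (N : ℕ → Ω → G) : Measure ((ℕ → S) × (ℕ → G)) :=
  P.map fun ω => (fun k => X k ω, fun k => N k ω)

/-- A solution is strong if each `X k` is a.s. equal to a `past N k`-measurable function,
i.e. `X k` is measurable for the `P`-completion of `σ(N_j : j ≤ -k)`. -/
def IsStrong {Ω S G : Type*} [MeasurableSpace Ω] [MeasurableSpace S] [MeasurableSpace G]
    (P : Measure Ω) (X : ℕ → Ω → S) (N : ℕ → Ω → G) : Prop :=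
  ∀ k, ∃ Y : Ω → S, Measurable[past N k] Y ∧ X k =ᵐ[P] Y

/-- Triviality of the tail σ-field `⨅ k, m k`. -/
def TailTrivial {Ω : Type*} [MeasurableSpace Ω] (P : Measure Ω)
    (m : ℕ → MeasurableSpace Ω) : Prop :=
  ∀ A : Set Ω, MeasurableSet[⨅ k, m k] A → P A = 0 ∨ P A = 1

/-- Convolution `μ * ν` of a measure on the acting semigroup with a measure on the space:
the pushforward of `μ ⊗ ν` under the action map. -/
def conv {G S : Type*} [MeasurableSpace G] [MeasurableSpace S] [SMul G S]
    (μ : Measure G) (ν : Measure S) : Measure S :=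
  (μ.prod ν).map fun p => p.1 • p.2

/-- Convolution of two measures on the semigroup. -/
def convG {G : Type*} [MeasurableSpace G] [Mul G] (μ ν : Measure G) : Measure G :=
  (μ.prod ν).map fun p => p.1 * p.2

/-- `prodN N n j = N_n · N_{n+1} · ⋯ · N_{n+j}`; in the time-indexing of the paper (index `m`
is time `-m`) this is `N_{k,l}` with `k = -n` and `l = -(n+j)-1 → -∞` as `j → ∞`. -/
def prodN {Ω G : Type*} [Mul G] (N : ℕ → Ω → G) (n : ℕ) : ℕ → Ω → G
  | 0 => N n
  | j + 1 => fun ω => prodN N n j ω * N (n + j + 1) ω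

/-- `convIter μ n j = μ_n * μ_{n+1} * ⋯ * μ_{n+j}`, the law analogue of `prodN`. -/
def convIter {G : Type*} [MeasurableSpace G] [Mul G] (μ : ℕ → Measure G) (n : ℕ) :
    ℕ → Measure G
  | 0 => μ n
  | j + 1 => convG (convIter μ n j) (μ (n + j + 1))

/-- `sigPow G n` is `Σ^{n+1}`, the set of products of `n+1` elements of `Σ = G`. -/
def sigPow (G : Type*) [Mul G] : ℕ → Set G
  | 0 => Set.univ
  | n + 1 => Set.image2 (· * ·) (sigPow G n) Set.univ

/-- Two sub-σ-fields are equal up to `P`-null sets. -/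
def EqModNull {Ω : Type*} [MeasurableSpace Ω] (P : Measure Ω)
    (m₁ m₂ : MeasurableSpace Ω) : Prop :=
  (∀ A, MeasurableSet[m₁] A → ∃ B, MeasurableSet[m₂] B ∧ P (symmDiff A B) = 0) ∧
  (∀ B, MeasurableSet[m₂] B → ∃ A, MeasurableSet[m₁] A ∧ P (symmDiff A B) = 0)

end

section Context

variable {S : Type u} {G : Type v}
  [TopologicalSpace S] [CompactSpace S] [TopologicalSpace.MetrizableSpace S]
  [SecondCountableTopology S] [MeasurableSpace S] [BorelSpace S]
  [TopologicalSpace G] [CompactSpace G] [TopologicalSpace.MetrizableSpace G]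
  [SecondCountableTopology G] [MeasurableSpace G] [BorelSpace G]
  [Semigroup G] [ContinuousMul G]
  [SMul G S] [ContinuousSMul G S] [IsScalarTower G G S]

end Context

section Example

/-- The full transformation semigroup of `S = {1,2,3}` (realized as `Fin 3`), with the
discrete σ-field. -/
instance : MeasurableSpace (Function.End (Fin 3)) := ⊤

/-- `σ⁽¹⁾ : 1 ↦ 2, 2 ↦ 1, 3 ↦ 2` (as `0 ↦ 1, 1 ↦ 0, 2 ↦ 1` on `Fin 3`). -/
def sig1 : Function.End (Fin 3) := ![1, 0, 1]

/-- `σ⁽²⁾ : 1 ↦ 3, 2 ↦ 3, 3 ↦ 1` (as `0 ↦ 2, 1 ↦ 2, 2 ↦ 0` on `Fin 3`). -/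
def sig2 : Function.End (Fin 3) := ![2, 2, 0]

/-! ### Auxiliary development -/

namespace TsAux
set_option linter.unusedSectionVars false

open MeasurableSpace Set

abbrev G3 := Function.End (Fin 3)

instance : DecidableEq G3 := inferInstanceAs (DecidableEq (Fin 3 → Fin 3))
instance : Finite G3 := inferInstanceAs (Finite (Fin 3 → Fin 3))
instance : MeasurableSingletonClass G3 := ⟨fun _ => trivial⟩

lemma smul_def (f : G3) (x : Fin 3) : f • x = f x := rfl
lemma mul_def (f g : G3) (x : Fin 3) : (f * g) x = f (g x) := rfl

lemma pair_const {f g : G3} (hf : f ∈ ({sig1, sig2} : Set G3))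
    (hg : g ∈ ({sig1, sig2} : Set G3)) (hfg : f ≠ g) (x y : Fin 3) :
    (f * g) x = (f * g) y := by
  rcases hf with rfl | rfl <;> rcases hg with rfl | rfl <;>
    first
      | exact absurd rfl hfg
      | (revert x y; decide)

/-- Partial products `n 0 * n 1 * ⋯ * n j`. -/
def pPath (n : ℕ → G3) : ℕ → G3
  | 0 => n 0
  | j + 1 => pPath n j * n (j + 1)

lemma pPath_eq_prodN {Ω : Type*} (N : ℕ → Ω → G3) (k : ℕ) (ω : Ω) :
    ∀ j, pPath (fun i => N (k + i) ω) j = prodN N k j ω := by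
  intro j
  induction j with
  | zero => rfl
  | succ j ih => show pPath _ j * N (k + (j+1)) ω = prodN N k j ω * N (k + j + 1) ω
                 rw [ih, ← Nat.add_assoc]

lemma pPath_const (n : ℕ → G3) (hall : ∀ i, n i ∈ ({sig1, sig2} : Set G3)) {j : ℕ}
    (hj : n j ≠ n (j + 1)) (x y : Fin 3) : pPath n (j + 1) x = pPath n (j + 1) y := by
  cases j with
  | zero => exact pair_const (hall 0) (hall 1) hj x y
  | succ j =>
    have h2 : pPath n (j + 2) = pPath n j * (n (j + 1) * n (j + 2)) := by
      show pPath n j * n (j+1) * n (j + 2) = _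
      rw [mul_assoc]
    rw [h2]
    show pPath n j ((n (j+1) * n (j+2)) x) = pPath n j ((n (j+1) * n (j+2)) y)
    rw [pair_const (hall (j+1)) (hall (j+2)) hj x y]

lemma measurable_pPath (j : ℕ) : Measurable fun n : ℕ → G3 => pPath n j := by
  induction j with
  | zero => exact measurable_pi_apply 0
  | succ j ih =>
    have : (fun n : ℕ → G3 => pPath n (j + 1)) =
        (fun p : G3 × G3 => p.1 * p.2) ∘ (fun n => (pPath n j, n (j + 1))) := rfl
    rw [this]
    exact (measurable_of_countable _).comp (ih.prodMk (measurable_pi_apply (j + 1)))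

open scoped Classical in
/-- The value of `X_0` as a function of the noise path `(N_0, N_1, N_2, …)`. -/
noncomputable def Ypath (n : ℕ → G3) : Fin 3 :=
  if h : n ∈ {m : ℕ → G3 | ∃ j, m j ≠ m (j + 1)} then pPath n (Nat.find h + 1) 0 else 0

lemma measurable_neq (j : ℕ) : MeasurableSet {n : ℕ → G3 | n j ≠ n (j + 1)} := by
  have : {n : ℕ → G3 | n j ≠ n (j + 1)} =
      (fun n : ℕ → G3 => (n j, n (j + 1))) ⁻¹' {p : G3 × G3 | p.1 ≠ p.2} := rfl
  rw [this]
  exact ((measurable_pi_apply j).prodMk (measurable_pi_apply (j + 1)))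
    (measurableSet_eq_fun measurable_fst measurable_snd).compl

lemma measurable_Ypath : Measurable Ypath := by
  classical
  have hs : MeasurableSet {n : ℕ → G3 | ∃ j, n j ≠ n (j + 1)} := by
    rw [Set.setOf_exists]; exact MeasurableSet.iUnion fun j => measurable_neq j
  have hf : Measurable fun x : {n : ℕ → G3 | ∃ j, n j ≠ n (j + 1)} =>
      pPath (x : ℕ → G3) (Nat.find x.2 + 1) 0 := by
    have := Measurable.find (f := fun j (x : {n : ℕ → G3 | ∃ j, n j ≠ n (j + 1)}) =>
        pPath (x : ℕ → G3) (j + 1) 0)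
      (p := fun j x => (x : ℕ → G3) j ≠ (x : ℕ → G3) (j + 1))
      (fun j => ((measurable_of_countable (fun g : G3 => g 0)).comp
        ((measurable_pPath (j + 1)).comp measurable_subtype_coe)))
      (fun j => measurable_subtype_coe (measurable_neq j))
      (fun x => x.2)
    exact this
  have hg : Measurable fun _ : ({n : ℕ → G3 | ∃ j, n j ≠ n (j + 1)}ᶜ : Set (ℕ → G3)) =>
      (0 : Fin 3) := measurable_const
  exact Measurable.dite hf hg hs

section Sol

variable {Ω : Type*} [MeasurableSpace Ω] {P : MeasureTheory.Measure Ω}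
  [MeasureTheory.IsProbabilityMeasure P]
  {μ : MeasureTheory.Measure G3} {X : ℕ → Ω → Fin 3} {N : ℕ → Ω → G3}

lemma measurableSet_top {α : Type*} {s : Set α} : MeasurableSet[⊤] s := trivial

lemma comap_le_past {α : Type*} [MeasurableSpace α] {Y : ℕ → Ω → α} (k i : ℕ) (hik : k ≤ i) :
    MeasurableSpace.comap (Y i) inferInstance ≤ past Y k :=
  le_biSup (f := fun j => MeasurableSpace.comap (Y j) inferInstance) hik

lemma iidN (hsol : IsSolution P (fun _ => μ) X N) (F : Finset ℕ) (g : ℕ → G3) :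
    P (⋂ i ∈ F, N i ⁻¹' {g i}) = ∏ i ∈ F, μ {g i} := by
  induction F using Finset.strongInduction with
  | _ F ih =>
    rcases F.eq_empty_or_nonempty with rfl | hF
    · simp
    · have hkF : F.min' hF ∈ F := F.min'_mem hF
      set k := F.min' hF with hk
      have hFeq : F = insert k (F.erase k) := (Finset.insert_erase hkF).symm
      rw [hFeq, Finset.set_biInter_insert, Finset.prod_insert (Finset.notMem_erase _ _)]
      have hmeas2 : MeasurableSet[past N (k + 1)] (⋂ i ∈ F.erase k, N i ⁻¹' {g i}) := by
        refine MeasurableSet.biInter (F.erase k).countable_toSet fun i hi => ?_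
        have hik : k + 1 ≤ i := by
          have h1 := Finset.min'_le F i (Finset.mem_of_mem_erase hi)
          have h2 : i ≠ k := Finset.ne_of_mem_erase hi
          omega
        exact comap_le_past (k + 1) i hik _ ⟨{g i}, measurableSet_top, rfl⟩
      have hindep := (ProbabilityTheory.Indep_iff _ _ _).1 (hsol.indep k)
        (N k ⁻¹' {g k}) (⋂ i ∈ F.erase k, N i ⁻¹' {g i})
        ⟨{g k}, measurableSet_top, rfl⟩
        (le_sup_right (a := past X (k + 1)) (b := past N (k + 1)) _ hmeas2)
      rw [hindep]
      have hlaw : P (N k ⁻¹' {g k}) = μ {g k} := by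
        conv_rhs => rw [← hsol.law_N k]
        rw [MeasureTheory.Measure.map_apply (hsol.measurable_N k) (measurableSet_singleton _)]
      rw [hlaw, ih (F.erase k) (Finset.erase_ssubset hkF)]

lemma ae_pair (hsol : IsSolution P (fun _ => μ) X N) [MeasureTheory.IsProbabilityMeasure μ]
    (hμpair : μ ({sig1, sig2} : Set G3) = 1) :
    ∀ᵐ ω ∂P, ∀ j, N j ω ∈ ({sig1, sig2} : Set G3) := by
  rw [MeasureTheory.ae_all_iff]
  intro j
  rw [MeasureTheory.ae_iff]
  have : {ω | ¬ N j ω ∈ ({sig1, sig2} : Set G3)} = N j ⁻¹' ({sig1, sig2} : Set G3)ᶜ := rfl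
  rw [this, ← MeasureTheory.Measure.map_apply (hsol.measurable_N j) measurableSet_top,
    hsol.law_N j, MeasureTheory.measure_compl measurableSet_top (MeasureTheory.measure_ne_top _ _),
    hμpair]
  simp

lemma run_prob (hsol : IsSolution P (fun _ => μ) X N) (k m : ℕ) (s : G3) :
    P (⋂ i ∈ Finset.range (m + 1), N (k + i) ⁻¹' {s}) = μ {s} ^ (m + 1) := by
  have himg : ⋂ i ∈ Finset.range (m + 1), N (k + i) ⁻¹' {s}
      = ⋂ i ∈ (Finset.range (m + 1)).image (fun i => k + i), N i ⁻¹' {((fun _ => s) i : G3)} := by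
    ext ω
    simp only [Set.mem_iInter, Finset.mem_image, Finset.mem_range]
    constructor
    · rintro h i ⟨i', hi', rfl⟩; exact h i' hi'
    · intro h i hi; exact h (k + i) ⟨i, hi, rfl⟩
  rw [himg, iidN hsol]
  rw [Finset.prod_const, Finset.card_image_of_injective _ (fun a b h => by omega),
    Finset.card_range]

variable {p q : ℝ}

lemma ae_switch (hsol : IsSolution P (fun _ => μ) X N)
    (hμ1 : μ {sig1} = ENNReal.ofReal p) (hμ2 : μ {sig2} = ENNReal.ofReal q)
    (hp1 : p < 1) (hq1 : q < 1) (k : ℕ) :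
    ∀ᵐ ω ∂P, (∀ j, N j ω ∈ ({sig1, sig2} : Set G3)) → ∃ i, N (k + i) ω ≠ N (k + i + 1) ω := by
  rw [MeasureTheory.ae_iff]
  set Bad := {ω | ¬((∀ j, N j ω ∈ ({sig1, sig2} : Set G3)) →
      ∃ i, N (k + i) ω ≠ N (k + i + 1) ω)} with hBad
  have hconst : ∀ ω ∈ Bad, ∀ i, N (k + i) ω = N k ω := by
    intro ω hω
    simp only [hBad, Set.mem_setOf_eq] at hω
    push_neg at hω
    intro i
    induction i with
    | zero => rfl
    | succ i ih => rw [← ih]; exact (hω.2 i).symm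
  have hsub : ∀ m, Bad ⊆ (⋂ i ∈ Finset.range (m + 1), N (k + i) ⁻¹' {sig1})
      ∪ (⋂ i ∈ Finset.range (m + 1), N (k + i) ⁻¹' {sig2}) := by
    intro m ω hω
    have hpair : N k ω ∈ ({sig1, sig2} : Set G3) := by
      simp only [hBad, Set.mem_setOf_eq] at hω
      push_neg at hω
      exact hω.1 k
    rcases hpair with h | h
    · left; simp only [Set.mem_iInter]
      intro i _; rw [Set.mem_preimage, hconst ω hω i, h]; rfl
    · right; simp only [Set.mem_iInter]
      intro i _; rw [Set.mem_preimage, hconst ω hω i, h]; rfl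
  have hbound : ∀ m, P Bad ≤ ENNReal.ofReal p ^ (m + 1) + ENNReal.ofReal q ^ (m + 1) := by
    intro m
    calc P Bad ≤ P ((⋂ i ∈ Finset.range (m + 1), N (k + i) ⁻¹' {sig1})
        ∪ (⋂ i ∈ Finset.range (m + 1), N (k + i) ⁻¹' {sig2})) :=
          MeasureTheory.measure_mono (hsub m)
    _ ≤ P (⋂ i ∈ Finset.range (m + 1), N (k + i) ⁻¹' {sig1})
        + P (⋂ i ∈ Finset.range (m + 1), N (k + i) ⁻¹' {sig2}) :=
          MeasureTheory.measure_union_le _ _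
    _ = ENNReal.ofReal p ^ (m + 1) + ENNReal.ofReal q ^ (m + 1) := by
          rw [run_prob hsol, run_prob hsol, hμ1, hμ2]
  have htend : Filter.Tendsto
      (fun m => ENNReal.ofReal p ^ (m + 1) + ENNReal.ofReal q ^ (m + 1))
      Filter.atTop (nhds 0) := by
    have h1 : Filter.Tendsto (fun m : ℕ => ENNReal.ofReal p ^ m) Filter.atTop (nhds 0) :=
      ENNReal.tendsto_pow_atTop_nhds_zero_of_lt_one (ENNReal.ofReal_lt_one.2 hp1)
    have h2 : Filter.Tendsto (fun m : ℕ => ENNReal.ofReal q ^ m) Filter.atTop (nhds 0) :=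
      ENNReal.tendsto_pow_atTop_nhds_zero_of_lt_one (ENNReal.ofReal_lt_one.2 hq1)
    have := ((h1.comp (Filter.tendsto_add_atTop_nat 1)).add
      (h2.comp (Filter.tendsto_add_atTop_nat 1)))
    simpa using this
  have := ge_of_tendsto' htend hbound
  exact le_antisymm this zero_le

lemma eqn_iter (hsol : IsSolution P (fun _ => μ) X N) (k : ℕ) (j : ℕ) :
    X k =ᵐ[P] fun ω => prodN N k j ω • X (k + j + 1) ω := by
  induction j with
  | zero => exact hsol.eqn k
  | succ j ih =>
    filter_upwards [ih, hsol.eqn (k + j + 1)] with ω h1 h2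
    rw [h1, h2, ← mul_smul]
    rfl

lemma rep (hsol : IsSolution P (fun _ => μ) X N) [MeasureTheory.IsProbabilityMeasure μ]
    (hμpair : μ ({sig1, sig2} : Set G3) = 1)
    (hμ1 : μ {sig1} = ENNReal.ofReal p) (hμ2 : μ {sig2} = ENNReal.ofReal q)
    (hp1 : p < 1) (hq1 : q < 1) (k : ℕ) :
    X k =ᵐ[P] fun ω => Ypath (fun i => N (k + i) ω) := by
  filter_upwards [ae_pair hsol hμpair, ae_switch hsol hμ1 hμ2 hp1 hq1 k,
    MeasureTheory.ae_all_iff.2 (eqn_iter hsol k)] with ω hpairω hswω heqω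
  set n : ℕ → G3 := fun i => N (k + i) ω with hn
  have h : n ∈ {m : ℕ → G3 | ∃ j, m j ≠ m (j + 1)} := by
    obtain ⟨i, hi⟩ := hswω hpairω
    exact ⟨i, by simpa [hn, ← Nat.add_assoc] using hi⟩
  show X k ω = Ypath n
  rw [Ypath, dif_pos h]
  set j0 := Nat.find h with hj0
  have hx : X k ω = prodN N k (j0 + 1) ω • X (k + (j0 + 1) + 1) ω := heqω (j0 + 1)
  rw [hx, smul_def, ← pPath_eq_prodN]
  exact pPath_const n (fun i => hpairω (k + i)) (Nat.find_spec h) _ 0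

end Sol

/-! ### Cylinder sets and the law of the noise path -/

def Cyl : Set (Set (ℕ → G3)) :=
  {s | ∃ (F : Finset ℕ) (g : ℕ → G3), s = {n | ∀ i ∈ F, n i = g i}}

lemma measurableSet_cyl (F : Finset ℕ) (g : ℕ → G3) :
    MeasurableSet {n : ℕ → G3 | ∀ i ∈ F, n i = g i} := by
  have : {n : ℕ → G3 | ∀ i ∈ F, n i = g i}
      = ⋂ i ∈ F, (fun n : ℕ → G3 => n i) ⁻¹' {g i} := by ext n; simp
  rw [this]
  exact MeasurableSet.biInter F.countable_toSet fun i _ =>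
    (measurable_pi_apply i) (measurableSet_singleton _)

lemma isPiSystem_Cyl : IsPiSystem Cyl := by
  rintro s ⟨F, g, rfl⟩ t ⟨F', g', rfl⟩ hne
  obtain ⟨n₀, hn₀⟩ := hne
  refine ⟨F ∪ F', fun i => if i ∈ F then g i else g' i, ?_⟩
  ext n
  simp only [Set.mem_inter_iff, Set.mem_setOf_eq, Finset.mem_union]
  constructor
  · rintro ⟨h1, h2⟩ i hi
    by_cases hiF : i ∈ F
    · rw [if_pos hiF]; exact h1 i hiF
    · rw [if_neg hiF]; exact h2 i (hi.resolve_left hiF)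
  · intro h
    constructor
    · intro i hi
      have := h i (Or.inl hi); rwa [if_pos hi] at this
    · intro i hi
      by_cases hiF : i ∈ F
      · have := h i (Or.inl hiF); rw [if_pos hiF] at this; rw [this]
        have e1 := hn₀.1 i hiF
        have e2 := hn₀.2 i hi
        rw [← e1, e2]
      · have := h i (Or.inr hi); rwa [if_neg hiF] at this

lemma pi_eq_generateFrom_Cyl :
    (inferInstance : MeasurableSpace (ℕ → G3)) = MeasurableSpace.generateFrom Cyl := by
  apply le_antisymm
  · show MeasurableSpace.pi ≤ _
    rw [MeasurableSpace.pi]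
    apply iSup_le
    intro i
    intro s hs
    obtain ⟨B, -, rfl⟩ := hs
    have : (fun n : ℕ → G3 => n i) ⁻¹' B
        = ⋃ g ∈ B, {n : ℕ → G3 | ∀ i' ∈ ({i} : Finset ℕ), n i' = (fun _ => g) i'} := by
      ext n; simp
    rw [this]
    exact MeasurableSet.biUnion B.to_countable fun g _ =>
      MeasurableSpace.measurableSet_generateFrom ⟨{i}, fun _ => g, rfl⟩
  · apply MeasurableSpace.generateFrom_le
    rintro s ⟨F, g, rfl⟩
    exact measurableSet_cyl F g

section Sol2

variable {Ω : Type*} [MeasurableSpace Ω] {P : MeasureTheory.Measure Ω}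
  [MeasureTheory.IsProbabilityMeasure P]
  {Ω' : Type*} [MeasurableSpace Ω'] {P' : MeasureTheory.Measure Ω'}
  [MeasureTheory.IsProbabilityMeasure P']
  {μ : MeasureTheory.Measure G3}
  {X : ℕ → Ω → Fin 3} {N : ℕ → Ω → G3}
  {X' : ℕ → Ω' → Fin 3} {N' : ℕ → Ω' → G3}

lemma map_Npath_eq (hsol : IsSolution P (fun _ => μ) X N)
    (hsol' : IsSolution P' (fun _ => μ) X' N') :
    P.map (fun ω i => N i ω) = P'.map (fun ω i => N' i ω) := by
  have hm : Measurable fun ω i => N i ω :=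
    measurable_pi_lambda _ fun i => hsol.measurable_N i
  have hm' : Measurable fun ω i => N' i ω :=
    measurable_pi_lambda _ fun i => hsol'.measurable_N i
  have : MeasureTheory.IsProbabilityMeasure (P.map (fun ω i => N i ω)) :=
    MeasureTheory.Measure.isProbabilityMeasure_map hm.aemeasurable
  have : MeasureTheory.IsProbabilityMeasure (P'.map (fun ω i => N' i ω)) :=
    MeasureTheory.Measure.isProbabilityMeasure_map hm'.aemeasurable
  refine MeasureTheory.ext_of_generate_finite Cyl pi_eq_generateFrom_Cyl isPiSystem_Cyl ?_ ?_
  · rintro s ⟨F, g, rfl⟩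
    rw [MeasureTheory.Measure.map_apply hm (measurableSet_cyl F g),
      MeasureTheory.Measure.map_apply hm' (measurableSet_cyl F g)]
    have h1 : (fun ω i => N i ω) ⁻¹' {n | ∀ i ∈ F, n i = g i} = ⋂ i ∈ F, N i ⁻¹' {g i} := by
      ext ω; simp
    have h2 : (fun ω i => N' i ω) ⁻¹' {n | ∀ i ∈ F, n i = g i} = ⋂ i ∈ F, N' i ⁻¹' {g i} := by
      ext ω; simp
    rw [h1, h2, iidN hsol F g, iidN hsol' F g]
  · rw [MeasureTheory.measure_univ, MeasureTheory.measure_univ]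

/-- The joint path as a function of the noise path. -/
noncomputable def Phi : (ℕ → G3) → (ℕ → Fin 3) × (ℕ → G3) :=
  fun n => (fun k => Ypath (fun i => n (k + i)), n)

lemma measurable_Phi : Measurable Phi :=
  Measurable.prodMk
    (measurable_pi_lambda _ fun k => measurable_Ypath.comp
      (measurable_pi_lambda _ fun i => measurable_pi_apply (k + i)))
    measurable_id

variable {p q : ℝ}

lemma jointLaw_rep (hsol : IsSolution P (fun _ => μ) X N)
    [MeasureTheory.IsProbabilityMeasure μ]
    (hμpair : μ ({sig1, sig2} : Set G3) = 1)
    (hμ1 : μ {sig1} = ENNReal.ofReal p) (hμ2 : μ {sig2} = ENNReal.ofReal q)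
    (hp1 : p < 1) (hq1 : q < 1) :
    jointLaw P X N = (P.map (fun ω i => N i ω)).map Phi := by
  have hm : Measurable fun ω i => N i ω :=
    measurable_pi_lambda _ fun i => hsol.measurable_N i
  rw [jointLaw, MeasureTheory.Measure.map_map measurable_Phi hm]
  apply MeasureTheory.Measure.map_congr
  filter_upwards [MeasureTheory.ae_all_iff.2
    (fun k => rep hsol hμpair hμ1 hμ2 hp1 hq1 k)] with ω hω
  exact Prod.ext (funext fun k => hω k) rfl

lemma jointLaw_unique (hsol : IsSolution P (fun _ => μ) X N)
    (hsol' : IsSolution P' (fun _ => μ) X' N')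
    [MeasureTheory.IsProbabilityMeasure μ]
    (hμpair : μ ({sig1, sig2} : Set G3) = 1)
    (hμ1 : μ {sig1} = ENNReal.ofReal p) (hμ2 : μ {sig2} = ENNReal.ofReal q)
    (hp1 : p < 1) (hq1 : q < 1) :
    jointLaw P X N = jointLaw P' X' N' := by
  rw [jointLaw_rep hsol hμpair hμ1 hμ2 hp1 hq1,
    jointLaw_rep hsol' hμpair hμ1 hμ2 hp1 hq1,
    map_Npath_eq hsol hsol']

lemma past_shift_le {α : Type*} [MeasurableSpace α] (Y : ℕ → Ω → α) (n k : ℕ) :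
    past (fun m => Y (m + n)) k ≤ past Y (k + n) := by
  refine iSup₂_le fun j hj => ?_
  exact le_biSup (f := fun i => MeasurableSpace.comap (Y i) inferInstance)
    (show k + n ≤ j + n by omega)

lemma shift_solution (hsol : IsSolution P (fun _ => μ) X N) (n : ℕ) :
    IsSolution P (fun _ => μ) (fun k => X (k + n)) (fun k => N (k + n)) := by
  constructor
  · exact fun k => hsol.measurable_X _
  · exact fun k => hsol.measurable_N _
  · intro k
    have e : k + 1 + n = k + n + 1 := by omega
    show X (k + n) =ᵐ[P] fun ω => N (k + n) ω • X (k + 1 + n) ω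
    rw [e]
    exact hsol.eqn (k + n)
  · intro k
    have hmono : ∀ (m₁ m₂ m₂' : MeasurableSpace Ω),
        ProbabilityTheory.Indep m₁ m₂ P → m₂' ≤ m₂ → ProbabilityTheory.Indep m₁ m₂' P := by
      intro m₁ m₂ m₂' h hle
      rw [ProbabilityTheory.Indep_iff] at h ⊢
      exact fun t1 t2 h1 h2 => h t1 t2 h1 (hle t2 h2)
    refine hmono _ _ _ (hsol.indep (k + n)) ?_
    refine sup_le_sup ?_ ?_
    · exact (past_shift_le X n (k + 1)).trans (le_of_eq (by rw [Nat.add_right_comm]))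
    · exact (past_shift_le N n (k + 1)).trans (le_of_eq (by rw [Nat.add_right_comm]))
  · exact fun k => hsol.law_N _

end Sol2

/-! ### Marginals -/

lemma measurable_pi_lambda' {α δ : Type*} {π : δ → Type*} {m : MeasurableSpace α}
    [∀ a, MeasurableSpace (π a)] (f : α → ∀ a, π a) (hf : ∀ a, Measurable fun c => f c a) :
    Measurable f := measurable_pi_iff.mpr hf

lemma contraction {f : ℕ → ℝ} {c r : ℝ} (hr0 : 0 ≤ r) (hr1 : r < 1)
    (hb : ∀ k, |f k - c| ≤ 1) (hrec : ∀ k, |f k - c| ≤ r * |f (k + 1) - c|) :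
    ∀ k, f k = c := by
  have key : ∀ m k, |f k - c| ≤ r ^ m := by
    intro m
    induction m with
    | zero => simpa using hb
    | succ m ih =>
      intro k
      calc |f k - c| ≤ r * |f (k + 1) - c| := hrec k
      _ ≤ r * r ^ m := mul_le_mul_of_nonneg_left (ih (k + 1)) hr0
      _ = r ^ (m + 1) := (pow_succ' r m).symm
  intro k
  have h0 : |f k - c| ≤ 0 :=
    ge_of_tendsto' (tendsto_pow_atTop_nhds_zero_of_lt_one hr0 hr1) fun m => key m k
  have h1 : |f k - c| = 0 := le_antisymm h0 (abs_nonneg _)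
  have := abs_eq_zero.1 h1
  linarith

section Marg

variable {Ω : Type*} [MeasurableSpace Ω] {P : MeasureTheory.Measure Ω}
  [MeasureTheory.IsProbabilityMeasure P]
  {μ : MeasureTheory.Measure G3} {X : ℕ → Ω → Fin 3} {N : ℕ → Ω → G3} {p q : ℝ}

lemma step_marg (hsol : IsSolution P (fun _ => μ) X N)
    [MeasureTheory.IsProbabilityMeasure μ]
    (hμpair : μ ({sig1, sig2} : Set G3) = 1) (k : ℕ) (x : Fin 3) :
    P (X k ⁻¹' {x}) = μ {sig1} * P (X (k + 1) ⁻¹' (sig1 ⁻¹' {x}))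
      + μ {sig2} * P (X (k + 1) ⁻¹' (sig2 ⁻¹' {x})) := by
  set A1 : Set Ω := N k ⁻¹' {sig1} ∩ X (k + 1) ⁻¹' (sig1 ⁻¹' {x}) with hA1
  set A2 : Set Ω := N k ⁻¹' {sig2} ∩ X (k + 1) ⁻¹' (sig2 ⁻¹' {x}) with hA2
  have h1 : P (X k ⁻¹' {x}) = P (A1 ∪ A2) := by
    apply MeasureTheory.measure_congr
    rw [Filter.eventuallyEq_set]
    filter_upwards [hsol.eqn k, ae_pair hsol hμpair] with ω hω hpairω
    simp only [Set.mem_preimage, Set.mem_singleton_iff, Set.mem_union, hA1, hA2,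
      Set.mem_inter_iff]
    rw [hω]
    constructor
    · intro hval
      rcases hpairω k with h | h
      · exact Or.inl ⟨h, by rw [← h]; exact hval⟩
      · exact Or.inr ⟨h, by rw [← h]; exact hval⟩
    · rintro (⟨hN, hX⟩ | ⟨hN, hX⟩) <;> rw [hN] <;> exact hX
  have hd : Disjoint A1 A2 := by
    rw [Set.disjoint_left]
    rintro ω ⟨h1', -⟩ ⟨h2', -⟩
    have : sig1 = sig2 := by
      rw [Set.mem_preimage, Set.mem_singleton_iff] at h1' h2'
      rw [← h1', h2']
    exact absurd this (by decide)
  have hmx : ∀ s : Set (Fin 3), MeasurableSet s := fun s =>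
    Set.Finite.measurableSet (Set.toFinite s)
  have hmeasA2 : MeasurableSet A2 :=
    ((hsol.measurable_N k) (measurableSet_singleton _)).inter
      ((hsol.measurable_X (k + 1)) (hmx _))
  have hsplit : ∀ s : G3, ∀ B : Set (Fin 3),
      P (N k ⁻¹' {s} ∩ X (k + 1) ⁻¹' B) = μ {s} * P (X (k + 1) ⁻¹' B) := by
    intro s B
    have hind := (ProbabilityTheory.Indep_iff _ _ _).1 (hsol.indep k)
      (N k ⁻¹' {s}) (X (k + 1) ⁻¹' B) ⟨{s}, measurableSet_top, rfl⟩
      (le_sup_left (a := past X (k + 1)) (b := past N (k + 1)) _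
        (comap_le_past (k + 1) (k + 1) le_rfl _ ⟨B, hmx B, rfl⟩))
    rw [hind]
    congr 1
    conv_rhs => rw [← hsol.law_N k]
    rw [MeasureTheory.Measure.map_apply (hsol.measurable_N k) (measurableSet_singleton _)]
  rw [h1, MeasureTheory.measure_union hd hmeasA2, hA1, hA2, hsplit, hsplit]

lemma rec_b (hsol : IsSolution P (fun _ => μ) X N)
    [MeasureTheory.IsProbabilityMeasure μ]
    (hμpair : μ ({sig1, sig2} : Set G3) = 1) (k : ℕ) :
    P (X k ⁻¹' {1}) = μ {sig1} * (1 - P (X (k + 1) ⁻¹' {1})) := by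
  have h := step_marg hsol hμpair k 1
  have e1 : sig1 ⁻¹' ({1} : Set (Fin 3)) = ({1} : Set (Fin 3))ᶜ := by
    ext y
    simp only [Set.mem_preimage, Set.mem_singleton_iff, Set.mem_compl_iff]
    revert y; exact (by decide : ∀ y : Fin 3, (![1, 0, 1] : Fin 3 → Fin 3) y = 1 ↔ ¬ y = 1)
  have e2 : sig2 ⁻¹' ({1} : Set (Fin 3)) = ∅ := by
    ext y
    simp only [Set.mem_preimage, Set.mem_singleton_iff, Set.mem_empty_iff_false, iff_false]
    revert y; exact (by decide : ∀ y : Fin 3, ¬ (![2, 2, 0] : Fin 3 → Fin 3) y = 1)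
  rw [e1, e2] at h
  simp only [Set.preimage_empty, MeasureTheory.measure_empty, mul_zero, add_zero] at h
  rw [h, Set.preimage_compl,
    MeasureTheory.measure_compl ((hsol.measurable_X (k + 1))
      (measurableSet_singleton _)) (MeasureTheory.measure_ne_top _ _),
    MeasureTheory.measure_univ]

lemma rec_c (hsol : IsSolution P (fun _ => μ) X N)
    [MeasureTheory.IsProbabilityMeasure μ]
    (hμpair : μ ({sig1, sig2} : Set G3) = 1) (k : ℕ) :
    P (X k ⁻¹' {2}) = μ {sig2} * (1 - P (X (k + 1) ⁻¹' {2})) := by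
  have h := step_marg hsol hμpair k 2
  have e1 : sig1 ⁻¹' ({2} : Set (Fin 3)) = ∅ := by
    ext y
    simp only [Set.mem_preimage, Set.mem_singleton_iff, Set.mem_empty_iff_false, iff_false]
    revert y; exact (by decide : ∀ y : Fin 3, ¬ (![1, 0, 1] : Fin 3 → Fin 3) y = 2)
  have e2 : sig2 ⁻¹' ({2} : Set (Fin 3)) = ({2} : Set (Fin 3))ᶜ := by
    ext y
    simp only [Set.mem_preimage, Set.mem_singleton_iff, Set.mem_compl_iff]
    revert y; exact (by decide : ∀ y : Fin 3, (![2, 2, 0] : Fin 3 → Fin 3) y = 2 ↔ ¬ y = 2)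
  rw [e1, e2] at h
  simp only [Set.preimage_empty, MeasureTheory.measure_empty, mul_zero, zero_add] at h
  rw [h, Set.preimage_compl,
    MeasureTheory.measure_compl ((hsol.measurable_X (k + 1))
      (measurableSet_singleton _)) (MeasureTheory.measure_ne_top _ _),
    MeasureTheory.measure_univ]

/-- Solve the fixed point recursion `f k = r * (1 - f (k+1))`. -/
lemma solve_rec {f : ℕ → ℝ} {r : ℝ} (hr0 : 0 < r) (hr1 : r < 1)
    (hb0 : ∀ k, 0 ≤ f k) (hb1 : ∀ k, f k ≤ 1)
    (hrec : ∀ k, f k = r * (1 - f (k + 1))) : ∀ k, f k = r / (1 + r) := by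
  have h1r : (0:ℝ) < 1 + r := by linarith
  apply contraction hr0.le hr1
  · intro k
    have h1 : 0 ≤ r / (1 + r) := div_nonneg hr0.le h1r.le
    have h2 : r / (1 + r) ≤ 1 := (div_le_one h1r).2 (by linarith)
    rw [abs_le]
    constructor <;> [linarith [hb1 k, hb0 k]; linarith [hb0 k, hb1 k]]
  · intro k
    have key : f k - r / (1 + r) = r * (r / (1 + r) - f (k + 1)) := by
      rw [hrec k]
      field_simp
      ring
    rw [key, abs_mul, abs_of_pos hr0, abs_sub_comm]

lemma toReal_rec {B C : ℝ≥0∞} {r : ℝ} (hr0 : 0 ≤ r) (hC1 : C ≤ 1)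
    (hB : B = ENNReal.ofReal r * (1 - C)) : B.toReal = r * (1 - C.toReal) := by
  rw [hB, ENNReal.toReal_mul, ENNReal.toReal_ofReal hr0,
    ENNReal.toReal_sub_of_le hC1 ENNReal.one_ne_top, ENNReal.toReal_one]

lemma marg_main (hsol : IsSolution P (fun _ => μ) X N)
    [MeasureTheory.IsProbabilityMeasure μ]
    (hμpair : μ ({sig1, sig2} : Set G3) = 1)
    (hμ1 : μ {sig1} = ENNReal.ofReal p) (hμ2 : μ {sig2} = ENNReal.ofReal q)
    (hp : 0 < p) (hq : 0 < q) (hpq : p + q = 1) (k : ℕ) :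
    P (X k ⁻¹' {0}) = ENNReal.ofReal ((1 - p * q) / (2 + p * q)) ∧
    P (X k ⁻¹' {1}) = ENNReal.ofReal ((p + p * q) / (2 + p * q)) ∧
    P (X k ⁻¹' {2}) = ENNReal.ofReal ((q + p * q) / (2 + p * q)) := by
  have hp1 : p < 1 := by linarith
  have hq1 : q < 1 := by linarith
  have hpq0 : 0 < p * q := mul_pos hp hq
  have h2pq : (0:ℝ) < 2 + p * q := by linarith
  set b : ℕ → ℝ := fun k => (P (X k ⁻¹' {1})).toReal with hbdef
  set c : ℕ → ℝ := fun k => (P (X k ⁻¹' {2})).toReal with hcdef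
  have hb0 : ∀ k, 0 ≤ b k := fun k => ENNReal.toReal_nonneg
  have hc0 : ∀ k, 0 ≤ c k := fun k => ENNReal.toReal_nonneg
  have hb1 : ∀ k, b k ≤ 1 := fun k => by
    simpa using ENNReal.toReal_mono ENNReal.one_ne_top (MeasureTheory.prob_le_one (μ := P))
  have hc1 : ∀ k, c k ≤ 1 := fun k => by
    simpa using ENNReal.toReal_mono ENNReal.one_ne_top (MeasureTheory.prob_le_one (μ := P))
  have hrecb : ∀ k, b k = p * (1 - b (k + 1)) := fun k =>
    toReal_rec hp.le MeasureTheory.prob_le_one (by rw [← hμ1]; exact rec_b hsol hμpair k)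
  have hrecc : ∀ k, c k = q * (1 - c (k + 1)) := fun k =>
    toReal_rec hq.le MeasureTheory.prob_le_one (by rw [← hμ2]; exact rec_c hsol hμpair k)
  have hbval : ∀ k, b k = p / (1 + p) := solve_rec hp hp1 hb0 hb1 hrecb
  have hcval : ∀ k, c k = q / (1 + q) := solve_rec hq hq1 hc0 hc1 hrecc
  -- partition of unity
  have hdisj12 : Disjoint (X k ⁻¹' ({1} : Set (Fin 3))) (X k ⁻¹' {2}) := by
    rw [Set.disjoint_left]
    rintro ω h1 h2
    rw [Set.mem_preimage, Set.mem_singleton_iff] at h1 h2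
    rw [h1] at h2; exact absurd h2 (by decide)
  have hcompl : X k ⁻¹' ({0} : Set (Fin 3)) = (X k ⁻¹' {1} ∪ X k ⁻¹' {2})ᶜ := by
    have h3 : ∀ x : Fin 3, x = 0 ↔ ¬(x = 1 ∨ x = 2) := by decide
    ext ω
    simp only [Set.mem_preimage, Set.mem_singleton_iff, Set.mem_compl_iff, Set.mem_union]
    exact h3 (X k ω)
  have hm1 : MeasurableSet (X k ⁻¹' ({1} : Set (Fin 3))) :=
    (hsol.measurable_X k) (measurableSet_singleton _)
  have hm2 : MeasurableSet (X k ⁻¹' ({2} : Set (Fin 3))) :=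
    (hsol.measurable_X k) (measurableSet_singleton _)
  have hP0 : P (X k ⁻¹' {0}) = 1 - (P (X k ⁻¹' {1}) + P (X k ⁻¹' {2})) := by
    rw [hcompl, MeasureTheory.measure_compl (hm1.union hm2) (MeasureTheory.measure_ne_top _ _),
      MeasureTheory.measure_union hdisj12 hm2, MeasureTheory.measure_univ]
  have hsum_le : P (X k ⁻¹' {1}) + P (X k ⁻¹' {2}) ≤ 1 := by
    rw [← MeasureTheory.measure_union hdisj12 hm2]
    exact MeasureTheory.prob_le_one
  -- real values
  have hb' : P (X k ⁻¹' {1}) = ENNReal.ofReal (p / (1 + p)) := by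
    rw [← ENNReal.ofReal_toReal (MeasureTheory.measure_ne_top P _)]
    exact congrArg ENNReal.ofReal (hbval k)
  have hc' : P (X k ⁻¹' {2}) = ENNReal.ofReal (q / (1 + q)) := by
    rw [← ENNReal.ofReal_toReal (MeasureTheory.measure_ne_top P _)]
    exact congrArg ENNReal.ofReal (hcval k)
  have h1p : (0:ℝ) < 1 + p := by linarith
  have h1q : (0:ℝ) < 1 + q := by linarith
  refine ⟨?_, ?_, ?_⟩
  · rw [hP0, hb', hc', ← ENNReal.ofReal_add (div_nonneg hp.le h1p.le) (div_nonneg hq.le h1q.le),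
      ← ENNReal.ofReal_one, ← ENNReal.ofReal_sub _ (by positivity)]
    congr 1
    rw [div_add_div _ _ (ne_of_gt h1p) (ne_of_gt h1q)]
    have h1 : (1 + p) * (1 + q) = 2 + p * q := by linear_combination hpq
    rw [h1]
    field_simp
    linear_combination (-1 : ℝ) * hpq
  · rw [hb']
    congr 1
    rw [div_eq_div_iff (ne_of_gt h1p) (ne_of_gt h2pq)]
    nlinarith [hpq]
  · rw [hc']
    congr 1
    rw [div_eq_div_iff (ne_of_gt h1q) (ne_of_gt h2pq)]
    nlinarith [hpq]

end Marg

end TsAux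

/-- For the i.i.d. noise law `μ = p δ_{σ⁽¹⁾} + q δ_{σ⁽²⁾}` on the
transformation semigroup of `{1,2,3}`, every solution has the explicit marginals (i),
uniqueness in law holds (ii), every solution is stationary (iii) and strong (iv). -/
theorem tsirelson_transformation_semigroup_example
    (p q : ℝ) (hp : 0 < p) (hq : 0 < q) (hpq : p + q = 1)
    (μ : Measure (Function.End (Fin 3))) (hμprob : IsProbabilityMeasure μ)
    (hμ1 : μ {sig1} = ENNReal.ofReal p) (hμ2 : μ {sig2} = ENNReal.ofReal q)
    {Ω : Type u} [MeasurableSpace Ω] (P : Measure Ω) [IsProbabilityMeasure P]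
    (X : ℕ → Ω → Fin 3) (N : ℕ → Ω → Function.End (Fin 3))
    (hsol : IsSolution P (fun _ => μ) X N) :
    (∀ k, P {ω | X k ω = 0} = ENNReal.ofReal ((1 - p * q) / (2 + p * q)) ∧
          P {ω | X k ω = 1} = ENNReal.ofReal ((p + p * q) / (2 + p * q)) ∧
          P {ω | X k ω = 2} = ENNReal.ofReal ((q + p * q) / (2 + p * q))) ∧
    (∀ (Ω' : Type v) (_ : MeasurableSpace Ω') (P' : Measure Ω')
        (X' : ℕ → Ω' → Fin 3) (N' : ℕ → Ω' → Function.End (Fin 3)),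
        IsProbabilityMeasure P' → IsSolution P' (fun _ => μ) X' N' →
        jointLaw P' X' N' = jointLaw P X N) ∧
    (∀ n : ℕ, P.map (fun ω => (fun m => X (m + n) ω, fun m => N (m + n) ω)) =
        P.map (fun ω => (fun m => X m ω, fun m => N m ω))) ∧
    IsStrong P X N := by
  haveI := hμprob
  have hp1 : p < 1 := by linarith
  have hq1 : q < 1 := by linarith
  have hμpair : μ ({sig1, sig2} : Set TsAux.G3) = 1 := by
    rw [Set.insert_eq,
      MeasureTheory.measure_union (Set.disjoint_singleton.2 (by decide))
        (measurableSet_singleton _),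
      hμ1, hμ2, ← ENNReal.ofReal_add hp.le hq.le, hpq, ENNReal.ofReal_one]
  refine ⟨?_, ?_, ?_, ?_⟩
  · intro k
    exact TsAux.marg_main hsol hμpair hμ1 hμ2 hp hq hpq k
  · intro Ω' mΩ' P' X' N' hP' hsol'
    haveI := hP'
    exact TsAux.jointLaw_unique hsol' hsol hμpair hμ1 hμ2 hp1 hq1
  · intro n
    exact TsAux.jointLaw_unique (TsAux.shift_solution hsol n) hsol hμpair hμ1 hμ2 hp1 hq1
  · intro k
    refine ⟨fun ω => TsAux.Ypath (fun i => N (k + i) ω), ?_, ?_⟩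
    · exact TsAux.measurable_Ypath.comp
        (TsAux.measurable_pi_lambda' (m := past N k) _ fun i =>
          measurable_iff_comap_le.2 (TsAux.comap_le_past k (k + i) (by omega)))
    · exact TsAux.rep hsol hμpair hμ1 hμ2 hp1 hq1 k

end Example
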